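/- Let a be a positive integer and l ≥ 1 with U^l(a) = a. Then for every real θ with 0 < θ < (2/3)^l, every y ∈ [a, a+θ), every m ∈ ℕ, and every i ∈ {0, 1, …, l−1}, one has ⌊U^{ml + i}(y)⌋ = U^i(a). -/
import Mathlib


/-- The real 3x+1 function: `Ux = x/2` if `⌊x⌋` is even, `(3x+1)/2` if `⌊x⌋` is odd. -/
noncomputable def U (x : ℝ) : ℝ := if Even ⌊x⌋ then x / 2 else (3 * x + 1) / 2

lemma floor_eq_nat' {b : ℕ} {x : ℝ} (h1 : (b:ℝ) ≤ x) (h2 : x - b < 1) : ⌊x⌋ = (b:ℤ) := by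
  rw [Int.floor_eq_iff]
  constructor
  · exact_mod_cast h1
  · push_cast; linarith

lemma Ukey (j : ℕ) : ∀ b : ℕ, 0 < b → ∃ (P Q : ℝ) (c : ℕ), 0 < P ∧ P ≤ (3/2:ℝ)^j ∧ 0 ≤ Q ∧
    0 < c ∧ U^[j] (b:ℝ) = c ∧
    ∀ x : ℝ, (b:ℝ) ≤ x → x - b < (2/3:ℝ)^j → U^[j] x = P * x + Q := by
  induction j with
  | zero =>
    intro b hb
    exact ⟨1, 0, b, one_pos, by norm_num, le_refl 0, hb, by simp, fun x _ _ => by simp⟩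
  | succ j ih =>
    intro b hb
    have hlt1 : ((2:ℝ)/3)^(j+1) ≤ 1 := pow_le_one₀ (by norm_num) (by norm_num)
    have hfl : ∀ x : ℝ, (b:ℝ) ≤ x → x - b < (2/3:ℝ)^(j+1) → ⌊x⌋ = (b:ℤ) := by
      intro x h1 h2
      exact floor_eq_nat' h1 (lt_of_lt_of_le h2 hlt1)
    have h23pos : (0:ℝ) < (2/3:ℝ)^j := by positivity
    have h32pos : (0:ℝ) < (3/2:ℝ)^j := by positivity
    rcases Nat.even_or_odd b with ⟨k, hk⟩ | ⟨k, hk⟩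
    · -- b = k + k, even case
      have hk' : 0 < k := by omega
      obtain ⟨P, Q, c, hP, hP2, hQ, hc, hcb, hx⟩ := ih k hk'
      have hUx : ∀ x : ℝ, (b:ℝ) ≤ x → x - b < (2/3:ℝ)^(j+1) → U x = x / 2 := by
        intro x h1 h2
        unfold U
        rw [hfl x h1 h2, if_pos]
        exact ⟨(k:ℤ), by exact_mod_cast hk⟩
      have hkb : ((b:ℝ)) / 2 = (k:ℝ) := by
        have : (b:ℝ) = (k:ℝ) + k := by exact_mod_cast hk
        linarith
      refine ⟨P/2, Q, c, by positivity, ?_, hQ, hc, ?_, ?_⟩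
      · rw [pow_succ]; nlinarith
      · rw [Function.iterate_succ_apply, hUx (b:ℝ) le_rfl (by simpa using (by positivity : (0:ℝ) < (2/3:ℝ)^(j+1))), hkb, hcb]
      · intro x h1 h2
        rw [Function.iterate_succ_apply, hUx x h1 h2]
        have hb2 : (b:ℝ) = (k:ℝ) + k := by exact_mod_cast hk
        have e1 : (k:ℝ) ≤ x / 2 := by linarith
        have e2 : x / 2 - k < (2/3:ℝ)^j := by
          rw [pow_succ] at h2
          nlinarith
        rw [hx (x/2) e1 e2]; ring
    · -- b = 2k+1, odd case
      obtain ⟨P, Q, c, hP, hP2, hQ, hc, hcb, hx⟩ := ih (3*k+2) (by omega)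
      have hUx : ∀ x : ℝ, (b:ℝ) ≤ x → x - b < (2/3:ℝ)^(j+1) → U x = (3*x+1) / 2 := by
        intro x h1 h2
        unfold U
        rw [hfl x h1 h2, if_neg]
        rw [hk]
        push_cast
        simp [Int.even_add_one, parity_simps]
      have hb2 : (b:ℝ) = 2*(k:ℝ) + 1 := by exact_mod_cast hk
      have hkb : (3*(b:ℝ)+1) / 2 = ((3*k+2 : ℕ):ℝ) := by push_cast; linarith
      refine ⟨3*P/2, Q + P/2, c, by positivity, ?_, by positivity, hc, ?_, ?_⟩
      · rw [pow_succ]; nlinarith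
      · rw [Function.iterate_succ_apply, hUx (b:ℝ) le_rfl (by simpa using (by positivity : (0:ℝ) < (2/3:ℝ)^(j+1))), hkb, hcb]
      · intro x h1 h2
        rw [Function.iterate_succ_apply, hUx x h1 h2]
        have e1 : ((3*k+2 : ℕ):ℝ) ≤ (3*x+1) / 2 := by push_cast; linarith
        have e2 : (3*x+1) / 2 - ((3*k+2 : ℕ):ℝ) < (2/3:ℝ)^j := by
          rw [pow_succ] at h2
          push_cast
          nlinarith
        rw [hx _ e1 e2]; ring

/-- If `a ∈ ℕ≥1` starts a `U`-cycle of length `l`, then for any `0 < θ < (2/3)^l` and any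
`y ∈ [a, a+θ)`, the floors along the trajectory of `y` follow the cycle of `a`. -/
theorem floors_follow_cycle (a : ℕ) (ha : 0 < a) (l : ℕ) (hl : 1 ≤ l)
    (hcyc : U^[l] (a : ℝ) = a) (θ : ℝ) (hθ0 : 0 < θ) (hθ : θ < (2 / 3 : ℝ) ^ l)
    (y : ℝ) (hy1 : (a : ℝ) ≤ y) (hy2 : y < a + θ) (m : ℕ) (i : ℕ) (hi : i < l) :
    (⌊U^[m * l + i] y⌋ : ℝ) = U^[i] (a : ℝ) := by
  have ha' : (0:ℝ) < a := by exact_mod_cast ha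
  -- the gap stays below θ after each full cycle
  have hcycle : ∀ m : ℕ, (a:ℝ) ≤ U^[m*l] y ∧ U^[m*l] y - a < θ := by
    obtain ⟨P, Q, c, hP, hP2, hQ, hc, hca, hx⟩ := Ukey l a ha
    have hPa : P * a + Q = a := by
      rw [← hx (a:ℝ) le_rfl (by simpa using (by positivity : (0:ℝ) < (2/3:ℝ)^l)), hcyc]
    have hP1 : P ≤ 1 := by nlinarith
    intro m
    induction m with
    | zero => simpa using ⟨hy1, by linarith⟩
    | succ m ihm =>
      obtain ⟨h1, h2⟩ := ihm
      have h2' : U^[m*l] y - a < (2/3:ℝ)^l := lt_trans h2 hθ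
      have hrw : (m+1)*l = l + m*l := by ring
      rw [hrw, Function.iterate_add_apply, hx _ h1 h2']
      constructor
      · nlinarith
      · nlinarith
  obtain ⟨h1, h2⟩ := hcycle m
  obtain ⟨P, Q, c, hP, hP2, hQ, hc, hca, hx⟩ := Ukey i a ha
  have hle : ((2:ℝ)/3)^l ≤ (2/3:ℝ)^i := pow_le_pow_of_le_one (by norm_num) (by norm_num) hi.le
  have h2' : U^[m*l] y - a < (2/3:ℝ)^i := lt_of_lt_of_le (lt_trans h2 hθ) hle
  have hUa : U^[i] (a:ℝ) = P * a + Q := hx (a:ℝ) le_rfl (by simpa using (by positivity : (0:ℝ) < (2/3:ℝ)^i))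
  have hcval : (c:ℝ) = P * a + Q := by rw [← hUa, hca]
  have hrw : m*l + i = i + m*l := by ring
  rw [hrw, Function.iterate_add_apply, hx _ h1 h2']
  have hone : ((3:ℝ)/2)^i * (2/3:ℝ)^i = 1 := by rw [← mul_pow]; norm_num
  have h32pos : (0:ℝ) < (3/2:ℝ)^i := by positivity
  have hfloor : ⌊P * U^[m*l] y + Q⌋ = (c:ℤ) := by
    rw [Int.floor_eq_iff]
    constructor
    · push_cast; nlinarith
    · push_cast
      have : P * (U^[m*l] y - a) < 1 := by nlinarith
      nlinarith
  rw [hfloor, hUa]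
  push_cast
  linarith [hcval]
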